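/- Theorem 1 (dual-variable bound): Under the MOSP setting with ε > V̄ and λ_1 = 0, every dual iterate satisfies ‖λ_t‖ ≤ μ·M + (2·G·R + R²/(2α) + μ·M²/2)/(ε − V̄) for all t ∈ {1, …, T+1}. -/

import Mathlib

open scoped RealInnerProductSpace
open Finset

/-- Entrywise positive projection on `ℝ^m`. -/
noncomputable def posProj {m : ℕ} (v : EuclideanSpace ℝ (Fin m)) :
    EuclideanSpace ℝ (Fin m) := WithLp.toLp 2 (fun i => max (v i) 0)

lemma posProj_apply {m : ℕ} (v : EuclideanSpace ℝ (Fin m)) (i : Fin m) :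
    posProj v i = max (v i) 0 := rfl

lemma norm_posProj_le {m : ℕ} (v : EuclideanSpace ℝ (Fin m)) :
    ‖posProj v‖ ≤ ‖v‖ := by
  rw [EuclideanSpace.norm_eq, EuclideanSpace.norm_eq]
  apply Real.sqrt_le_sqrt
  apply Finset.sum_le_sum
  intro i _
  have h1 : ‖posProj v i‖ ≤ ‖v i‖ := by
    rw [posProj_apply, Real.norm_eq_abs, Real.norm_eq_abs]
    rcases le_or_gt (v i) 0 with h | h
    · rw [max_eq_right h]; simp [abs_nonneg]
    · rw [max_eq_left h.le]
  exact pow_le_pow_left₀ (norm_nonneg _) h1 2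

lemma norm_le_sum_of_nonneg {m : ℕ} (w : EuclideanSpace ℝ (Fin m))
    (hw : ∀ i, 0 ≤ w i) : ‖w‖ ≤ ∑ i, w i := by
  rw [EuclideanSpace.norm_eq]
  have h1 : ∑ i, ‖w i‖ ^ 2 ≤ (∑ i, w i) ^ 2 := by
    have := Finset.sum_sq_le_sq_sum_of_nonneg (f := fun i => w i)
      (s := Finset.univ) (fun i _ => hw i)
    simpa [Real.norm_eq_abs, abs_of_nonneg (hw _)] using this
  calc Real.sqrt (∑ i, ‖w i‖ ^ 2) ≤ Real.sqrt ((∑ i, w i) ^ 2) :=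
        Real.sqrt_le_sqrt h1
    _ = ∑ i, w i := by
        rw [Real.sqrt_sq (Finset.sum_nonneg fun i _ => hw i)]

lemma inner_le_norm_mul_posProj {m : ℕ} (w v : EuclideanSpace ℝ (Fin m))
    (hw : ∀ i, 0 ≤ w i) : ⟪w, v⟫ ≤ ‖w‖ * ‖posProj v‖ := by
  have h1 : ⟪w, v⟫ ≤ ⟪w, posProj v⟫ := by
    rw [PiLp.inner_apply, PiLp.inner_apply]
    apply Finset.sum_le_sum
    intro i _
    simp only [RCLike.inner_apply, conj_trivial, posProj_apply]
    exact mul_le_mul_of_nonneg_right (le_max_left _ _) (hw i)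
  exact h1.trans (real_inner_le_norm _ _)

set_option maxHeartbeats 1000000 in
/-- Theorem 1 (dual-variable bound) for the MOSP recursion. -/
theorem mosp_dual_variable_bound {n m : ℕ} (hm : 0 < m)
    (T : ℕ) (hT : 1 ≤ T)
    (X : Set (EuclideanSpace ℝ (Fin n))) (hXne : X.Nonempty) (hXconv : Convex ℝ X)
    (R G M ε Vbar α μ : ℝ)
    (hR : ∀ x ∈ X, ∀ y ∈ X, ‖x - y‖ ≤ R)
    (f : ℕ → EuclideanSpace ℝ (Fin n) → ℝ)
    (hfconv : ∀ t, ConvexOn ℝ Set.univ (f t))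
    (hfdiff : ∀ t, Differentiable ℝ (f t))
    (hG : ∀ t, ∀ x ∈ X, ‖gradient (f t) x‖ ≤ G)
    (g : ℕ → EuclideanSpace ℝ (Fin n) → EuclideanSpace ℝ (Fin m))
    (hgconv : ∀ t i, ConvexOn ℝ Set.univ fun x => g t x i)
    (hM : ∀ t, ∀ x ∈ X, ‖g t x‖ ≤ M)
    (hε : 0 < ε)
    (hSlater : ∃ xt ∈ X, ∀ t, ∀ i, g t xt i ≤ -ε)
    (hVbar : 0 ≤ Vbar)
    (hvar : ∀ t, ∀ x ∈ X, ‖posProj (g (t + 1) x - g t x)‖ ≤ Vbar)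
    (hεV : Vbar < ε)
    (hα : 0 < α) (hμ : 0 < μ)
    (x : ℕ → EuclideanSpace ℝ (Fin n))
    (lam : ℕ → EuclideanSpace ℝ (Fin m))
    (hx0 : x 0 ∈ X) (hlam1 : lam 1 = 0)
    (hprimal : ∀ t, 1 ≤ t → x t ∈ X ∧ ∀ z ∈ X,
      ⟪gradient (f (t - 1)) (x (t - 1)), x t - x (t - 1)⟫ + ⟪lam t, g (t - 1) (x t)⟫ +
          ‖x t - x (t - 1)‖ ^ 2 / (2 * α) ≤
        ⟪gradient (f (t - 1)) (x (t - 1)), z - x (t - 1)⟫ + ⟪lam t, g (t - 1) z⟫ +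
          ‖z - x (t - 1)‖ ^ 2 / (2 * α))
    (hdual : ∀ t, 1 ≤ t → lam (t + 1) = posProj (lam t + μ • g t (x t))) :
    ∀ t, 1 ≤ t → t ≤ T + 1 →
      ‖lam t‖ ≤ μ * M + (2 * G * R + R ^ 2 / (2 * α) + μ * M ^ 2 / 2) / (ε - Vbar) := by
  obtain ⟨xs, hxs, hxsle⟩ := hSlater
  obtain ⟨x0', hx0'⟩ := hXne
  have hR0 : 0 ≤ R := by have := hR x0' hx0' x0' hx0'; simpa using this
  have hG0 : 0 ≤ G := le_trans (norm_nonneg _) (hG 0 x0' hx0')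
  have hM0 : 0 ≤ M := le_trans (norm_nonneg _) (hM 0 x0' hx0')
  set D : ℝ := ε - Vbar with hDdef
  have hD : 0 < D := by simp [hDdef]; linarith
  set B : ℝ := (2 * G * R + R ^ 2 / (2 * α) + μ * M ^ 2 / 2) / D with hBdef
  have hnum : 0 ≤ 2 * G * R + R ^ 2 / (2 * α) + μ * M ^ 2 / 2 := by positivity
  have hB0 : 0 ≤ B := div_nonneg hnum hD.le
  have hDB : D * B = 2 * G * R + R ^ 2 / (2 * α) + μ * M ^ 2 / 2 := by
    rw [hBdef, mul_div_cancel₀ _ hD.ne']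
  -- nonnegativity of dual iterates
  have hlamnn : ∀ t, 1 ≤ t → ∀ i, 0 ≤ lam t i := by
    intro t ht
    induction t, ht using Nat.le_induction with
    | base => intro i; rw [hlam1]; simp
    | succ t ht _ => intro i; rw [hdual t ht, posProj_apply]; exact le_max_right _ _
  -- primal iterates feasible
  have hxX : ∀ t, x t ∈ X := by
    intro t
    rcases Nat.eq_zero_or_pos t with h | h
    · rw [h]; exact hx0
    · exact (hprimal t h).1
  -- key inner-product bound
  have key : ∀ t, 1 ≤ t →
      ⟪lam t, g t (x t)⟫ ≤ G * R + R ^ 2 / (2 * α) - D * ‖lam t‖ := by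
    intro t ht
    obtain ⟨hxtX, hopt⟩ := hprimal t ht
    have h1 := hopt xs hxs
    have hsplit : ⟪gradient (f (t - 1)) (x (t - 1)), xs - x (t - 1)⟫ -
        ⟪gradient (f (t - 1)) (x (t - 1)), x t - x (t - 1)⟫ =
        ⟪gradient (f (t - 1)) (x (t - 1)), xs - x t⟫ := by
      rw [← inner_sub_right]
      congr 1
      abel
    have hb1 : ⟪gradient (f (t - 1)) (x (t - 1)), xs - x t⟫ ≤ G * R := by
      refine le_trans (real_inner_le_norm _ _) ?_
      exact mul_le_mul (hG (t - 1) _ (hxX (t - 1))) (hR xs hxs (x t) hxtX)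
        (norm_nonneg _) hG0
    have hb2 : ⟪lam t, g (t - 1) xs⟫ ≤ -ε * ‖lam t‖ := by
      have hsum : ⟪lam t, g (t - 1) xs⟫ ≤ -ε * ∑ i, lam t i := by
        rw [PiLp.inner_apply]
        have hms : -ε * ∑ i, lam t i = ∑ i, -ε * lam t i := Finset.mul_sum _ _ _
        rw [hms]
        apply Finset.sum_le_sum
        intro i _
        simp only [RCLike.inner_apply, conj_trivial]
        nlinarith [hlamnn t ht i, hxsle (t - 1) i]
      have hl1 : ‖lam t‖ ≤ ∑ i, lam t i :=
        norm_le_sum_of_nonneg _ (hlamnn t ht)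
      have : -ε * ∑ i, lam t i ≤ -ε * ‖lam t‖ := by
        apply mul_le_mul_of_nonpos_left hl1
        linarith
      linarith
    have hb3 : ‖xs - x (t - 1)‖ ^ 2 / (2 * α) ≤ R ^ 2 / (2 * α) := by
      apply div_le_div_of_nonneg_right _ (by positivity)
      · exact pow_le_pow_left₀ (norm_nonneg _) (hR xs hxs (x (t - 1)) (hxX _)) 2
    have hb4 : ⟪lam t, g t (x t) - g (t - 1) (x t)⟫ ≤ ‖lam t‖ * Vbar := by
      refine le_trans (inner_le_norm_mul_posProj _ _ (hlamnn t ht)) ?_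
      apply mul_le_mul_of_nonneg_left _ (norm_nonneg _)
      have := hvar (t - 1) (x t) hxtX
      rwa [Nat.sub_add_cancel ht] at this
    have hsq : 0 ≤ ‖x t - x (t - 1)‖ ^ 2 / (2 * α) := by positivity
    have h2 : ⟪lam t, g (t - 1) (x t)⟫ ≤
        G * R + R ^ 2 / (2 * α) + -ε * ‖lam t‖ := by
      linarith [h1, hsplit, hb1, hb2, hb3, hsq]
    have h3 : ⟪lam t, g t (x t)⟫ - ⟪lam t, g (t - 1) (x t)⟫ =
        ⟪lam t, g t (x t) - g (t - 1) (x t)⟫ := (inner_sub_right _ _ _).symm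
    have := hb4
    simp only [hDdef]
    linarith [h2, h3, hb4]
  -- main induction
  have main : ∀ t, 1 ≤ t → ‖lam t‖ ≤ μ * M + B := by
    intro t ht
    induction t, ht using Nat.le_induction with
    | base =>
      rw [hlam1, norm_zero]
      have : 0 ≤ μ * M := mul_nonneg hμ.le hM0
      linarith
    | succ t ht ih =>
      have hnormg : ‖g t (x t)‖ ≤ M := hM t _ (hxX t)
      have hstep : ‖lam (t + 1)‖ ≤ ‖lam t + μ • g t (x t)‖ := by
        rw [hdual t ht]; exact norm_posProj_le _
      by_cases hc : ‖lam t‖ ≤ B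
      · have : ‖lam t + μ • g t (x t)‖ ≤ ‖lam t‖ + ‖μ • g t (x t)‖ :=
          norm_add_le _ _
        have hsm : ‖μ • g t (x t)‖ = μ * ‖g t (x t)‖ := by
          rw [norm_smul, Real.norm_eq_abs, abs_of_pos hμ]
        have : ‖lam t + μ • g t (x t)‖ ≤ B + μ * M := by
          rw [hsm] at this
          have := mul_le_mul_of_nonneg_left hnormg hμ.le
          linarith
        linarith
      · push_neg at hc
        have hsq : ‖lam t + μ • g t (x t)‖ ^ 2 ≤ ‖lam t‖ ^ 2 := by
          rw [norm_add_sq_real, real_inner_smul_right, norm_smul,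
            Real.norm_eq_abs, abs_of_pos hμ]
          have h2 := key t ht
          have h3 : ‖g t (x t)‖ ^ 2 ≤ M ^ 2 :=
            pow_le_pow_left₀ (norm_nonneg _) hnormg 2
          have h4 : D * B < D * ‖lam t‖ := mul_lt_mul_of_pos_left hc hD
          rw [hDB] at h4
          have hGR : 0 ≤ G * R := mul_nonneg hG0 hR0
          nlinarith [mul_le_mul_of_nonneg_left h2 hμ.le,
            mul_le_mul_of_nonneg_left h3 (mul_pos hμ hμ).le,
            mul_le_mul_of_nonneg_left hGR hμ.le,
            mul_lt_mul_of_pos_left h4 hμ]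
        have hle : ‖lam t + μ • g t (x t)‖ ≤ ‖lam t‖ := by
          nlinarith [norm_nonneg (lam t + μ • g t (x t)), norm_nonneg (lam t)]
        linarith
  intro t ht _
  exact main t ht
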